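/- Lipschitz property of the smoothed probability map under Gaussian smoothing: for measurable h : ℝ → [0,1], the function H(x) = E[h(x+ε)] with ε ~ N(0,σ²) satisfies that Φ⁻¹ ∘ H (where defined and H ∈ (0,1)) is (1/σ)-Lipschitz: |Φ⁻¹(H(x)) − Φ⁻¹(H(x'))| ≤ |x − x'| / σ. -/

import Mathlib

open MeasureTheory ProbabilityTheory Real Set

open scoped ENNReal NNReal

/-- Standard Gaussian CDF. -/
noncomputable def Phi (t : ℝ) : ℝ :=
  ∫ u in Set.Iic t, (Real.sqrt (2 * Real.pi))⁻¹ * Real.exp (-u ^ 2 / 2)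

/-- Inverse of the standard Gaussian CDF. -/
noncomputable def PhiInv : ℝ → ℝ := Function.invFun Phi

/-- Isotropic Gaussian measure `N(x, σ²I)` on `ℝᵈ`. -/
noncomputable def gaussPi (d : ℕ) (x : EuclideanSpace ℝ (Fin d)) (σ : NNReal) :
    Measure (EuclideanSpace ℝ (Fin d)) :=
  Measure.map (MeasurableEquiv.toLp 2 (Fin d → ℝ))
    (Measure.pi fun i => gaussianReal (x i) (σ ^ 2))

lemma Phi_eq (t : ℝ) : Phi t = ∫ u in Set.Iic t, gaussianPDFReal 0 1 u := by
  unfold Phi gaussianPDFReal; norm_num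

lemma Phi_eq_toReal (t : ℝ) : Phi t = (gaussianReal 0 1 (Set.Iic t)).toReal := by
  rw [gaussianReal_apply_eq_integral 0 one_ne_zero, ENNReal.toReal_ofReal
    (integral_nonneg fun u => gaussianPDFReal_nonneg 0 1 u), Phi_eq]

lemma Phi_strictMono : StrictMono Phi := by
  intro a b hab
  have hint : Integrable (gaussianPDFReal 0 1) := integrable_gaussianPDFReal 0 1
  have hsub : Phi b - Phi a = ∫ u in a..b, gaussianPDFReal 0 1 u := by
    rw [Phi_eq, Phi_eq]
    exact intervalIntegral.integral_Iic_sub_Iic hint.restrict hint.restrict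
  have hpos : 0 < ∫ u in a..b, gaussianPDFReal 0 1 u := by
    apply intervalIntegral.intervalIntegral_pos_of_pos_on hint.intervalIntegrable
    · exact fun x _ => gaussianPDFReal_pos 0 1 x one_ne_zero
    · exact hab
  linarith

lemma Phi_continuous : Continuous Phi := by
  have hint : Integrable (gaussianPDFReal 0 1) := integrable_gaussianPDFReal 0 1
  have : Continuous fun t => Phi 0 + ∫ u in (0:ℝ)..t, gaussianPDFReal 0 1 u :=
    continuous_const.add (hint.continuous_primitive 0)
  convert this using 1
  funext t
  rw [Phi_eq, Phi_eq, ← intervalIntegral.integral_Iic_sub_Iic hint.restrict hint.restrict]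
  ring

lemma Phi_tendsto_atTop : Filter.Tendsto Phi Filter.atTop (nhds 1) := by
  have h := tendsto_measure_Iic_atTop (gaussianReal 0 1)
  rw [measure_univ] at h
  have h2 : Filter.Tendsto (fun t => (gaussianReal 0 1 (Set.Iic t)).toReal)
      Filter.atTop (nhds 1) := by
    have := (ENNReal.tendsto_toReal (by norm_num : (1:ℝ≥0∞) ≠ ⊤)).comp h
    simpa [Function.comp_def] using this
  convert h2 using 1
  funext t; exact Phi_eq_toReal t

lemma Phi_tendsto_atBot : Filter.Tendsto Phi Filter.atBot (nhds 0) := by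
  have h : Filter.Tendsto (fun t => gaussianReal 0 1 (Set.Iic t)) Filter.atBot (nhds 0) := by
    have hm : Filter.Tendsto ((gaussianReal 0 1) ∘ Set.Iic) Filter.atBot
        (nhds (gaussianReal 0 1 (⋂ t : ℝ, Set.Iic t))) := by
      apply tendsto_measure_iInter_atBot
        (fun t => measurableSet_Iic.nullMeasurableSet) monotone_Iic
      exact ⟨0, measure_ne_top _ _⟩
    have : (⋂ t : ℝ, Set.Iic t) = ∅ := by
      ext x
      simp only [Set.mem_iInter, Set.mem_Iic, Set.mem_empty_iff_false, iff_false, not_forall]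
      exact ⟨x - 1, by push_neg; linarith⟩
    rwa [this, measure_empty] at hm
  have h2 := (ENNReal.tendsto_toReal (by norm_num : (0:ℝ≥0∞) ≠ ⊤)).comp h
  simp only [ENNReal.toReal_zero] at h2
  convert h2 using 1
  funext t; exact Phi_eq_toReal t

lemma Phi_surj {p : ℝ} (hp : p ∈ Set.Ioo (0:ℝ) 1) : ∃ t, Phi t = p := by
  obtain ⟨a, ha⟩ := (Phi_tendsto_atBot.eventually_lt_const hp.1).exists
  obtain ⟨b, hb⟩ := (Phi_tendsto_atTop.eventually_const_lt hp.2).exists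
  have : p ∈ Set.Icc (Phi a) (Phi b) := ⟨ha.le, hb.le⟩
  obtain ⟨t, ht⟩ := intermediate_value_univ a b Phi_continuous this
  exact ⟨t, ht⟩

lemma Phi_PhiInv {p : ℝ} (hp : p ∈ Set.Ioo (0:ℝ) 1) : Phi (PhiInv p) = p :=
  Function.invFun_eq (Phi_surj hp)

lemma gaussianReal_eq_map (σ : ℝ≥0) (hσ : 0 < σ) (m : ℝ) :
    gaussianReal m (σ ^ 2) =
      Measure.map (fun z => (σ:ℝ) * z + m) (gaussianReal 0 1) := by
  have h1 : Measure.map (fun z => (σ:ℝ) * z) (gaussianReal 0 1) = gaussianReal 0 (σ ^ 2) := by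
    have hvv : (⟨(σ:ℝ)^2, sq_nonneg _⟩ : ℝ≥0) * 1 = σ ^ 2 := by
      rw [mul_one]
      exact Subtype.ext (NNReal.coe_pow σ 2).symm
    have := gaussianReal_map_const_mul (μ := 0) (v := 1) (σ:ℝ)
    rw [mul_zero] at this
    convert this using 2
    exact hvv.symm
  have h2 : Measure.map (· + m) (gaussianReal 0 (σ ^ 2)) = gaussianReal m (σ ^ 2) := by
    rw [gaussianReal_map_add_const m, zero_add]
  rw [← h2, ← h1, Measure.map_map (measurable_add_const m) (measurable_const_mul _)]
  rfl

lemma gauss_cdf (σ : ℝ≥0) (hσ : 0 < σ) (m c : ℝ) :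
    ∫ t in Set.Iic c, gaussianPDFReal m (σ ^ 2) t = Phi ((c - m) / σ) := by
  have hv : (σ ^ 2 : ℝ≥0) ≠ 0 := pow_ne_zero 2 hσ.ne'
  have hs : (0:ℝ) < σ := hσ
  have key : ((gaussianReal m (σ ^ 2)) (Set.Iic c)).toReal = Phi ((c - m) / σ) := by
    rw [gaussianReal_eq_map σ hσ m, Measure.map_apply
      ((measurable_const_mul _).add_const m) measurableSet_Iic]
    have hpre : (fun z => (σ:ℝ) * z + m) ⁻¹' Set.Iic c = Set.Iic ((c - m) / σ) := by
      ext z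
      simp only [Set.mem_preimage, Set.mem_Iic, le_div_iff₀ hs]
      constructor <;> intro hz <;> nlinarith
    rw [hpre, ← Phi_eq_toReal]
  rw [← key, gaussianReal_apply_eq_integral m hv, ENNReal.toReal_ofReal
    (integral_nonneg fun u => gaussianPDFReal_nonneg _ _ u)]

lemma integral_gauss_rep (σ : ℝ≥0) (hσ : 0 < σ) (h : ℝ → ℝ) (hmeas : Measurable h) (x : ℝ) :
    ∫ u, h (x + u) ∂(gaussianReal 0 (σ ^ 2))
      = ∫ t, h t * gaussianPDFReal x (σ ^ 2) t := by
  have hv : (σ ^ 2 : ℝ≥0) ≠ 0 := pow_ne_zero 2 hσ.ne'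
  have h1 : ∫ u, h (x + u) ∂(gaussianReal 0 (σ ^ 2))
      = ∫ t, h t ∂(gaussianReal x (σ ^ 2)) := by
    have hmap : gaussianReal x (σ ^ 2) = Measure.map (x + ·) (gaussianReal 0 (σ ^ 2)) := by
      rw [gaussianReal_map_const_add, zero_add]
    rw [hmap, integral_map (measurable_const_add x).aemeasurable hmeas.aestronglyMeasurable]
  rw [h1, gaussianReal_of_var_ne_zero x hv]
  have hd : (gaussianPDF x (σ ^ 2)) = fun t =>
      ((Real.toNNReal (gaussianPDFReal x (σ ^ 2) t) : ℝ≥0) : ℝ≥0∞) := by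
    funext t; rfl
  rw [hd, integral_withDensity_eq_integral_smul
    (measurable_gaussianPDFReal x (σ ^ 2)).real_toNNReal h]
  congr 1
  funext t
  rw [NNReal.smul_def, smul_eq_mul, Real.coe_toNNReal _ (gaussianPDFReal_nonneg _ _ t), mul_comm]

lemma integrable_mul_pdf (v : ℝ≥0) (m : ℝ) {φ : ℝ → ℝ} (hφ : Measurable φ)
    (hb : ∀ t, φ t ∈ Set.Icc (0:ℝ) 1) :
    Integrable (fun t => φ t * gaussianPDFReal m v t) := by
  refine (integrable_gaussianPDFReal m v).mono
    (hφ.mul (measurable_gaussianPDFReal m v)).aestronglyMeasurable (ae_of_all _ fun t => ?_)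
  have h1 := (hb t).1; have h2 := (hb t).2
  have hp := gaussianPDFReal_nonneg m v t
  simp only [Real.norm_eq_abs, abs_mul]
  rw [abs_of_nonneg hp, abs_of_nonneg h1]
  nlinarith

lemma pdf_ratio {v : ℝ≥0} (hv : v ≠ 0) {x x' t c : ℝ} (hxx : x ≤ x') (htc : t ≤ c) :
    gaussianPDFReal x' v t * gaussianPDFReal x v c
      ≤ gaussianPDFReal x' v c * gaussianPDFReal x v t := by
  have hv' : (0:ℝ) < v := by
    have : 0 < v := pos_iff_ne_zero.mpr hv
    exact_mod_cast this
  have h2v : (0:ℝ) < 2 * v := by linarith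
  unfold gaussianPDFReal
  set K := (Real.sqrt (2 * π * v))⁻¹ with hK
  have hK0 : 0 ≤ K := by positivity
  have hexp : rexp (-(t - x')^2/(2*(v:ℝ))) * rexp (-(c - x)^2/(2*(v:ℝ)))
      ≤ rexp (-(c - x')^2/(2*(v:ℝ))) * rexp (-(t - x)^2/(2*(v:ℝ))) := by
    rw [← Real.exp_add, ← Real.exp_add, Real.exp_le_exp, ← add_div, ← add_div,
      div_le_div_iff_of_pos_right h2v]
    nlinarith [mul_nonneg (sub_nonneg.mpr htc) (sub_nonneg.mpr hxx)]
  calc K * rexp (-(t - x')^2/(2*(v:ℝ))) * (K * rexp (-(c - x)^2/(2*(v:ℝ))))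
      = (K * K) * (rexp (-(t - x')^2/(2*(v:ℝ))) * rexp (-(c - x)^2/(2*(v:ℝ)))) := by ring
    _ ≤ (K * K) * (rexp (-(c - x')^2/(2*(v:ℝ))) * rexp (-(t - x)^2/(2*(v:ℝ)))) :=
        mul_le_mul_of_nonneg_left hexp (mul_nonneg hK0 hK0)
    _ = K * rexp (-(c - x')^2/(2*(v:ℝ))) * (K * rexp (-(t - x)^2/(2*(v:ℝ)))) := by ring

lemma NP (σ : ℝ≥0) (hσ : 0 < σ) (h : ℝ → ℝ) (hmeas : Measurable h)
    (hrange : ∀ u, h u ∈ Set.Icc (0 : ℝ) 1) {x x' : ℝ} (hxx : x ≤ x')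
    (hp : (∫ t, h t * gaussianPDFReal x (σ ^ 2) t) ∈ Set.Ioo (0:ℝ) 1) :
    Phi (PhiInv (∫ t, h t * gaussianPDFReal x (σ ^ 2) t) - (x' - x) / σ)
      ≤ ∫ t, h t * gaussianPDFReal x' (σ ^ 2) t := by
  have hv : (σ ^ 2 : ℝ≥0) ≠ 0 := pow_ne_zero 2 hσ.ne'
  have hs : (0:ℝ) < σ := hσ
  set p := ∫ t, h t * gaussianPDFReal x (σ ^ 2) t with hpdef
  set c := x + σ * PhiInv p with hc
  set g : ℝ → ℝ := (Set.Iic c).indicator (fun _ => 1) with hg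
  have hgmeas : Measurable g := measurable_const.indicator measurableSet_Iic
  have hgrange : ∀ t, g t ∈ Set.Icc (0:ℝ) 1 := by
    intro t
    by_cases ht : t ∈ Set.Iic c
    · simp [hg, Set.indicator_of_mem ht]
    · simp [hg, Set.indicator_of_notMem ht]
  have intg : ∀ m, ∫ t, g t * gaussianPDFReal m (σ ^ 2) t = Phi ((c - m) / σ) := by
    intro m
    rw [← gauss_cdf σ hσ m c, ← integral_indicator measurableSet_Iic]
    congr 1; funext t
    by_cases ht : t ∈ Set.Iic c
    · simp [hg, Set.indicator_of_mem ht]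
    · simp [hg, Set.indicator_of_notMem ht]
  have hgx : ∫ t, g t * gaussianPDFReal x (σ ^ 2) t = p := by
    rw [intg x]
    have hcx : (c - x) / (σ:ℝ) = PhiInv p := by
      rw [hc]; field_simp; ring
    rw [hcx, Phi_PhiInv hp]
  set r := gaussianPDFReal x' (σ ^ 2) c / gaussianPDFReal x (σ ^ 2) c with hr
  have hpdfpos : ∀ (m t : ℝ), 0 < gaussianPDFReal m (σ ^ 2) t :=
    fun m t => gaussianPDFReal_pos m (σ ^ 2) t hv
  have hptw : ∀ t, 0 ≤ (h t - g t) *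
      (gaussianPDFReal x' (σ ^ 2) t - r * gaussianPDFReal x (σ ^ 2) t) := by
    intro t
    rcases le_or_gt t c with htc | htc
    · have hmem : t ∈ Set.Iic c := htc
      have hg1 : g t = 1 := Set.indicator_of_mem hmem _
      have hratio := pdf_ratio hv hxx htc
      have h2 : gaussianPDFReal x' (σ ^ 2) t - r * gaussianPDFReal x (σ ^ 2) t ≤ 0 := by
        rw [sub_nonpos, hr, div_mul_eq_mul_div, le_div_iff₀ (hpdfpos x c)]
        linarith
      have h1 : h t - g t ≤ 0 := by rw [hg1]; linarith [(hrange t).2]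
      nlinarith [mul_nonneg (neg_nonneg.mpr h1) (neg_nonneg.mpr h2)]
    · have hmem : t ∉ Set.Iic c := by simpa using htc.not_ge
      have hg0 : g t = 0 := Set.indicator_of_notMem hmem _
      have hratio := pdf_ratio hv hxx htc.le
      have h2 : 0 ≤ gaussianPDFReal x' (σ ^ 2) t - r * gaussianPDFReal x (σ ^ 2) t := by
        rw [sub_nonneg, hr, div_mul_eq_mul_div, div_le_iff₀ (hpdfpos x c)]
        linarith
      have h1 : 0 ≤ h t - g t := by rw [hg0]; linarith [(hrange t).1]
      exact mul_nonneg h1 h2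
  have inth : ∀ m : ℝ, Integrable (fun t => h t * gaussianPDFReal m (σ ^ 2) t) :=
    fun m => integrable_mul_pdf _ m hmeas hrange
  have intgI : ∀ m : ℝ, Integrable (fun t => g t * gaussianPDFReal m (σ ^ 2) t) :=
    fun m => integrable_mul_pdf _ m hgmeas hgrange
  have key : 0 ≤ ∫ t, (h t - g t) *
      (gaussianPDFReal x' (σ ^ 2) t - r * gaussianPDFReal x (σ ^ 2) t) :=
    integral_nonneg hptw
  have lin : ∫ t, (h t - g t) *
        (gaussianPDFReal x' (σ ^ 2) t - r * gaussianPDFReal x (σ ^ 2) t)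
      = ((∫ t, h t * gaussianPDFReal x' (σ ^ 2) t)
          - ∫ t, g t * gaussianPDFReal x' (σ ^ 2) t)
        - r * ((∫ t, h t * gaussianPDFReal x (σ ^ 2) t)
          - ∫ t, g t * gaussianPDFReal x (σ ^ 2) t) := by
    have I1 : Integrable (fun t => h t * gaussianPDFReal x' (σ ^ 2) t
        - g t * gaussianPDFReal x' (σ ^ 2) t) := (inth x').sub (intgI x')
    have I2 : Integrable (fun t => r * (h t * gaussianPDFReal x (σ ^ 2) t
        - g t * gaussianPDFReal x (σ ^ 2) t)) := ((inth x).sub (intgI x)).const_mul r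
    rw [← integral_sub (inth x') (intgI x'), ← integral_sub (inth x) (intgI x),
      ← integral_const_mul r, ← integral_sub I1 I2]
    congr 1; funext t; ring
  rw [lin, hgx, ← hpdef, sub_self, mul_zero, sub_zero, intg x'] at key
  have hcx' : (c - x') / (σ:ℝ) = PhiInv p - (x' - x) / σ := by
    rw [hc]; field_simp; ring
  rw [hcx'] at key
  linarith

lemma integral_comp_neg'' (f : ℝ → ℝ) : ∫ t : ℝ, f (-t) = ∫ t : ℝ, f t := by
  have A : MeasurableEmbedding (fun x : ℝ => -x) :=
    (Homeomorph.neg ℝ).measurableEmbedding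
  rw [← A.integral_map, Measure.map_neg_eq_self (volume : Measure ℝ)]

lemma pdf_neg (v : ℝ≥0) (m t : ℝ) :
    gaussianPDFReal (-m) v t = gaussianPDFReal m v (-t) := by
  unfold gaussianPDFReal
  congr 1
  ring_nf

lemma NP' (σ : ℝ≥0) (hσ : 0 < σ) (h : ℝ → ℝ) (hmeas : Measurable h)
    (hrange : ∀ u, h u ∈ Set.Icc (0 : ℝ) 1) (x x' : ℝ)
    (hp : (∫ t, h t * gaussianPDFReal x (σ ^ 2) t) ∈ Set.Ioo (0:ℝ) 1) :
    Phi (PhiInv (∫ t, h t * gaussianPDFReal x (σ ^ 2) t) - |x' - x| / σ)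
      ≤ ∫ t, h t * gaussianPDFReal x' (σ ^ 2) t := by
  rcases le_total x x' with hxx | hxx
  · rw [abs_of_nonneg (by linarith : (0:ℝ) ≤ x' - x)]
    exact NP σ hσ h hmeas hrange hxx hp
  · -- reflection: apply NP to h ∘ neg at points -x ≤ -x'
    have hrefl : ∀ m : ℝ, ∫ t, h (-t) * gaussianPDFReal (-m) (σ ^ 2) t
        = ∫ t, h t * gaussianPDFReal m (σ ^ 2) t := by
      intro m
      have h2 := integral_comp_neg'' (fun u => h u * gaussianPDFReal m (σ ^ 2) u)
      simp only [← pdf_neg] at h2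
      exact h2
    have hp' : (∫ t, h (-t) * gaussianPDFReal (-x) (σ ^ 2) t) ∈ Set.Ioo (0:ℝ) 1 := by
      rw [hrefl x]; exact hp
    have := NP σ hσ (fun t => h (-t)) (hmeas.comp measurable_neg)
      (fun u => hrange (-u)) (by linarith : -x ≤ -x') hp'
    rw [hrefl x, hrefl x'] at this
    rw [abs_of_nonpos (by linarith : x' - x ≤ 0)]
    convert this using 3
    ring
  

/-- Lipschitz property of Gaussian smoothing: for `h : ℝ → [0,1]` and
`H(x) = E[h(x+ε)]`, the map `Φ⁻¹ ∘ H` is `(1/σ)`-Lipschitz wherever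
`H ∈ (0,1)`. -/
theorem stmt_13 (σ : NNReal) (hσ : 0 < σ) (h : ℝ → ℝ) (hmeas : Measurable h)
    (hrange : ∀ u, h u ∈ Set.Icc (0 : ℝ) 1) :
    ∀ x x' : ℝ,
      (∫ u, h (x + u) ∂(gaussianReal 0 (σ ^ 2))) ∈ Set.Ioo (0 : ℝ) 1 →
      (∫ u, h (x' + u) ∂(gaussianReal 0 (σ ^ 2))) ∈ Set.Ioo (0 : ℝ) 1 →
      |PhiInv (∫ u, h (x + u) ∂(gaussianReal 0 (σ ^ 2)))
        - PhiInv (∫ u, h (x' + u) ∂(gaussianReal 0 (σ ^ 2)))| ≤ |x - x'| / σ := by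
  intro x x' hx hx'
  rw [integral_gauss_rep σ hσ h hmeas x] at hx ⊢
  rw [integral_gauss_rep σ hσ h hmeas x'] at hx' ⊢
  set Hx := ∫ t, h t * gaussianPDFReal x (σ ^ 2) t with hHx
  set Hx' := ∫ t, h t * gaussianPDFReal x' (σ ^ 2) t with hHx'
  have d1 : Phi (PhiInv Hx - |x' - x| / σ) ≤ Hx' := NP' σ hσ h hmeas hrange x x' hx
  have d2 : Phi (PhiInv Hx' - |x - x'| / σ) ≤ Hx := NP' σ hσ h hmeas hrange x' x hx'
  rw [← Phi_PhiInv hx'] at d1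
  rw [← Phi_PhiInv hx] at d2
  have e1 : PhiInv Hx - |x' - x| / σ ≤ PhiInv Hx' := Phi_strictMono.le_iff_le.mp d1
  have e2 : PhiInv Hx' - |x - x'| / σ ≤ PhiInv Hx := Phi_strictMono.le_iff_le.mp d2
  rw [abs_sub_comm x' x] at e1
  rw [abs_sub_le_iff]
  constructor <;> linarith
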